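/- Let n ≥ 1, let v₁, …, v_n ∈ ℝ, let v ∈ ℝ be a target value, and let w₁, …, w_n ∈ ℝ with w_i ≥ 0 for all i and w̄ := (1/n) Σ_i w_i > 0. Set x_i = v_i − v, x̄ = (1/n) Σ_i x_i, and Cov(w, x) = (1/n) Σ_i w_i x_i − w̄ x̄. Assume the bias-corrective similarity weighting conditions: (i) x̄ · Cov(w, x) ≤ 0, and (ii) |Cov(w, x)| ≤ 2 w̄ |x̄|. Then the probability-weighted estimator has no larger absolute bias than the average estimator: |(Σ_i w_i v_i)/(Σ_i w_i) − v| ≤ |(1/n) Σ_i v_i − v|. -/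

import Mathlib

lemma aux_bias (wbar xbar C : ℝ) (hwbar : 0 < wbar) (hsign : xbar * C ≤ 0)
    (hmag : |C| ≤ 2 * wbar * |xbar|) : |xbar + C / wbar| ≤ |xbar| := by
  have key : |wbar * xbar + C| ≤ wbar * |xbar| := by
    rw [abs_le]
    obtain ⟨ha, hb⟩ := abs_le.mp hmag
    rcases abs_cases xbar with ⟨h1, _⟩ | ⟨h1, _⟩ <;> rw [h1] at ha hb ⊢ <;>
      constructor <;> nlinarith
  have heq : xbar + C / wbar = (wbar * xbar + C) / wbar := by
    field_simp
  rw [heq, abs_div, abs_of_pos hwbar, div_le_iff₀ hwbar]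
  nlinarith [key]

/-- Bias improvement by similarity weighting: under the bias-corrective conditions
(i) `x̄ · Cov(w,x) ≤ 0` and (ii) `|Cov(w,x)| ≤ 2 w̄ |x̄|` (with `x_i = v_i − v`), the
probability-weighted estimator has no larger absolute bias than the average
estimator: `|(Σ_i w_i v_i)/(Σ_i w_i) − v| ≤ |(1/n) Σ_i v_i − v|`. -/
theorem probability_weighted_bias_improvement (n : ℕ) (hn : 1 ≤ n)
    (v : Fin n → ℝ) (vt : ℝ)
    (w : Fin n → ℝ) (hw : ∀ i, 0 ≤ w i)
    (hwbar : 0 < (1 / (n : ℝ)) * ∑ i, w i)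
    (hsign : ((1 / (n : ℝ)) * ∑ i, (v i - vt)) *
        ((1 / (n : ℝ)) * (∑ i, w i * (v i - vt))
          - ((1 / (n : ℝ)) * ∑ i, w i) * ((1 / (n : ℝ)) * ∑ i, (v i - vt))) ≤ 0)
    (hmag : |(1 / (n : ℝ)) * (∑ i, w i * (v i - vt))
          - ((1 / (n : ℝ)) * ∑ i, w i) * ((1 / (n : ℝ)) * ∑ i, (v i - vt))|
        ≤ 2 * ((1 / (n : ℝ)) * ∑ i, w i) * |(1 / (n : ℝ)) * ∑ i, (v i - vt)|) :
    |(∑ i, w i * v i) / (∑ i, w i) - vt| ≤ |(1 / (n : ℝ)) * (∑ i, v i) - vt| := by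
  have hn0 : (0:ℝ) < n := by positivity
  set wbar := (1 / (n : ℝ)) * ∑ i, w i with hwb
  set xbar := (1 / (n : ℝ)) * ∑ i, (v i - vt) with hxb
  set C := (1 / (n : ℝ)) * (∑ i, w i * (v i - vt)) - wbar * xbar with hC
  have hS : (0:ℝ) < ∑ i, w i := by
    by_contra h
    push_neg at h
    nlinarith [hwbar, mul_nonpos_of_nonneg_of_nonpos (le_of_lt (one_div_pos.mpr hn0)) h]
  have hxbar : xbar = (1 / (n : ℝ)) * (∑ i, v i) - vt := by
    rw [hxb, Finset.sum_sub_distrib, Finset.sum_const, Finset.card_univ, Fintype.card_fin]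
    field_simp
    rw [nsmul_eq_mul]
  have hlhs : (∑ i, w i * v i) / (∑ i, w i) - vt = xbar + C / wbar := by
    have hsum : ∑ i, w i * (v i - vt) = ∑ i, w i * v i - (∑ i, w i) * vt := by
      rw [Finset.sum_mul, ← Finset.sum_sub_distrib]
      congr 1; ext i; ring
    have h1 : xbar + C / wbar = ((1 / (n : ℝ)) * ∑ i, w i * (v i - vt)) / wbar := by
      rw [hC, sub_div, mul_div_cancel_left₀ xbar hwbar.ne']
      ring
    have h2 : ((1 / (n : ℝ)) * ∑ i, w i * (v i - vt)) / wbar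
        = (∑ i, w i * (v i - vt)) / (∑ i, w i) := by
      rw [hwb]
      exact mul_div_mul_left _ _ (by positivity)
    rw [h1, h2, hsum, sub_div, mul_div_cancel_left₀ vt hS.ne']
  rw [hlhs, ← hxbar]
  exact aux_bias wbar xbar C hwbar hsign hmag
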